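/- Let ρ be a positive definite Hermitian matrix with trace 1, δρ a Hermitian matrix, and δω the solution of ρ·δω + δω·ρ = δρ. Then Tr(δρ·δω) = 2·Tr(δω·ρ·δω), and this quantity is a nonnegative real number, equal to zero if and only if δρ = 0. -/

import Mathlib

open Matrix ComplexOrder

/-- Uniqueness for the Lyapunov equation: if `ρ` is positive definite and
`ρ*Z + Z*ρ = 0` then `Z = 0`. -/
lemma lyapunov_zero {n : ℕ} {ρ Z : Matrix (Fin n) (Fin n) ℂ}
    (hρ : ρ.PosDef) (h : ρ * Z + Z * ρ = 0) : Z = 0 := by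
  have hE := hρ.1
  set W : Matrix (Fin n) (Fin n) ℂ := (hE.eigenvectorUnitary : Matrix (Fin n) (Fin n) ℂ)
  have hWU : W ∈ Matrix.unitaryGroup (Fin n) ℂ := hE.eigenvectorUnitary.2
  have hW1 : W * Wᴴ = 1 := by
    simpa [star_eq_conjTranspose] using (Matrix.mem_unitaryGroup_iff.mp hWU)
  have hW2 : Wᴴ * W = 1 := by
    simpa [star_eq_conjTranspose] using (Matrix.mem_unitaryGroup_iff'.mp hWU)
  set D : Matrix (Fin n) (Fin n) ℂ :=
    Matrix.diagonal (RCLike.ofReal ∘ hE.eigenvalues)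
  have hspec : ρ = W * D * Wᴴ := by
    exact hE.spectral_theorem
  set Y : Matrix (Fin n) (Fin n) ℂ := Wᴴ * Z * W with hY
  have hc1 : ∀ M : Matrix (Fin n) (Fin n) ℂ, W * (Wᴴ * M) = M := fun M => by
    rw [← Matrix.mul_assoc, hW1, Matrix.one_mul]
  have hc2 : ∀ M : Matrix (Fin n) (Fin n) ℂ, Wᴴ * (W * M) = M := fun M => by
    rw [← Matrix.mul_assoc, hW2, Matrix.one_mul]
  have hDY : D * Y + Y * D = 0 := by
    have h' := congrArg (fun M => Wᴴ * M * W) h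
    simp only [Matrix.mul_add, Matrix.add_mul, Matrix.mul_zero, Matrix.zero_mul] at h'
    rw [hspec] at h'
    simp only [Matrix.mul_assoc, hc1, hc2, hW1, hW2, Matrix.mul_one, Matrix.one_mul] at h'
    simp only [hY, Matrix.mul_assoc]
    exact h'
  have hYzero : Y = 0 := by
    ext i j
    have := congrFun (congrFun hDY i) j
    simp [D, Matrix.mul_apply, Matrix.diagonal, Finset.sum_ite_eq, Finset.sum_ite_eq'] at this
    have hpos : (0:ℝ) < hE.eigenvalues i + hE.eigenvalues j :=
      add_pos (hρ.eigenvalues_pos i) (hρ.eigenvalues_pos j)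
    have hne : ((hE.eigenvalues i : ℂ) + (hE.eigenvalues j : ℂ)) ≠ 0 := by
      rw [← Complex.ofReal_add]
      exact_mod_cast hpos.ne'
    have : ((hE.eigenvalues i : ℂ) + (hE.eigenvalues j : ℂ)) * Y i j = 0 := by
      rw [add_mul]; linear_combination this
    simpa using (mul_eq_zero.mp this).resolve_left hne
  have : Z = W * Y * Wᴴ := by
    simp only [hY, Matrix.mul_assoc, hc1, hc2, hW1, hW2, Matrix.mul_one, Matrix.one_mul]
  rw [this, hYzero]; simp

theorem bures_form_nonneg {n : ℕ} (ρ δρ δω : Matrix (Fin n) (Fin n) ℂ)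
    (hρ : ρ.PosDef) (htr : ρ.trace = 1) (hδρ : δρ.IsHermitian)
    (hδω : ρ * δω + δω * ρ = δρ) :
    (δρ * δω).trace = 2 * (δω * ρ * δω).trace ∧
    (∃ r : ℝ, 0 ≤ r ∧ (δρ * δω).trace = (r : ℂ)) ∧
    ((δρ * δω).trace = 0 ↔ δρ = 0) := by
  -- δω is Hermitian by uniqueness of the Lyapunov solution
  have hHerm : δω.IsHermitian := by
    have h2 : ρ * δωᴴ + δωᴴ * ρ = δρ := by
      have := congrArg Matrix.conjTranspose hδω
      simpa [Matrix.conjTranspose_add, Matrix.conjTranspose_mul, hρ.1.eq, hδρ.eq,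
        add_comm] using this
    have : ρ * (δω - δωᴴ) + (δω - δωᴴ) * ρ = 0 := by
      simp only [Matrix.mul_sub, Matrix.sub_mul]
      rw [sub_add_sub_comm, hδω, h2, sub_self]
    have := lyapunov_zero hρ this
    exact (sub_eq_zero.mp this).symm
  -- trace identity
  have htrace_id : (δρ * δω).trace = 2 * (δω * ρ * δω).trace := by
    rw [← hδω, Matrix.add_mul, Matrix.trace_add, Matrix.trace_mul_comm (ρ * δω) δω,
      ← Matrix.mul_assoc]
    ring
  -- express δω * ρ * δω as Aᴴ * A with A = sqrt ρ * δω
  open scoped MatrixOrder Matrix.Norms.L2Operator in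
  set S : Matrix (Fin n) (Fin n) ℂ := CFC.sqrt ρ with hS
  have hSH : S.IsHermitian := by
    open scoped MatrixOrder Matrix.Norms.L2Operator in
    exact (CFC.sqrt_nonneg ρ).posSemidef.1
  have hSS : S * S = ρ := by
    open scoped MatrixOrder Matrix.Norms.L2Operator in
    exact CFC.sqrt_mul_sqrt_self ρ hρ.posSemidef.nonneg
  set A : Matrix (Fin n) (Fin n) ℂ := S * δω with hA
  have hkey : δω * ρ * δω = Aᴴ * A := by
    rw [hA, Matrix.conjTranspose_mul, hSH.eq, hHerm.eq, ← hSS]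
    simp [Matrix.mul_assoc]
  -- the trace of Aᴴ * A is a nonnegative real
  set r : ℝ := ∑ j, ∑ i, Complex.normSq (A i j) with hr
  have hr_nonneg : 0 ≤ r :=
    Finset.sum_nonneg fun j _ => Finset.sum_nonneg fun i _ => Complex.normSq_nonneg _
  have htrA : (Aᴴ * A).trace = (r : ℂ) := by
    rw [Matrix.trace, hr]
    push_cast
    refine Finset.sum_congr rfl fun j _ => ?_
    rw [Matrix.diag_apply, Matrix.mul_apply]
    refine Finset.sum_congr rfl fun i _ => ?_
    rw [Matrix.conjTranspose_apply, Complex.star_def, ← Complex.normSq_eq_conj_mul_self]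
  have hval : (δρ * δω).trace = ((2 * r : ℝ) : ℂ) := by
    rw [htrace_id, hkey, htrA]; push_cast; ring
  refine ⟨htrace_id, ⟨2 * r, by linarith, hval⟩, ?_⟩
  constructor
  · intro h0
    have hr0 : r = 0 := by
      have h2r : ((2 * r : ℝ) : ℂ) = 0 := by rw [← hval]; exact h0
      have : (2 * r : ℝ) = 0 := by exact_mod_cast h2r
      linarith
    -- r = 0 means A = 0
    have hA0 : A = 0 := by
      ext i j
      have hj := (Finset.sum_eq_zero_iff_of_nonneg (fun j _ =>
        Finset.sum_nonneg fun i _ => Complex.normSq_nonneg (A i j))).mp hr0 j (Finset.mem_univ j)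
      have hi := (Finset.sum_eq_zero_iff_of_nonneg (fun i _ =>
        Complex.normSq_nonneg (A i j))).mp hj i (Finset.mem_univ i)
      simpa using Complex.normSq_eq_zero.mp hi
    have hδω0 : δω = 0 := by
      have hρδω : ρ * δω = 0 := by rw [← hSS, Matrix.mul_assoc, ← hA, hA0, Matrix.mul_zero]
      calc δω = ρ⁻¹ * (ρ * δω) := by
                rw [← Matrix.mul_assoc,
                  Matrix.nonsing_inv_mul ρ ((Matrix.isUnit_iff_isUnit_det ρ).mp hρ.isUnit),
                  Matrix.one_mul]
        _ = 0 := by rw [hρδω, Matrix.mul_zero]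
    rw [← hδω, hδω0]; simp
  · intro h0
    rw [h0]; simp
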